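/- arXiv:1302.1936 — 2 statements merged into one kernel-verified Lean document; each statement's English description precedes it below -/
import Mathlib

section
/- Cyclic equivalence of potentials is an equivalence relation compatible with Jacobian ideals: if potentials S and S' on a quiver Q are cyclically equivalent, then J(S) = J(S'), and hence 𝒫(Q,S) = 𝒫(Q,S'). -/
open scoped Classical

/-- A quiver on vertex set `V`: a set of arrows with tail (`src`) and head (`tgt`) maps. -/
structure Quiv (V : Type) where
  A : Type
  src : A → V
  tgt : A → V

namespace Quiv

variable {V : Type} (Q : Quiv V)

/-- `Comp a b` means the arrow `a` can be composed after `b` (t(a) = h(b)). -/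
def Comp (a b : Q.A) : Prop := Q.src a = Q.tgt b

/-- Positive-length paths: nonempty lists `[α₁, …, α_ℓ]` of composable arrows
(function-composition order: `t(α_j) = h(α_{j+1})`). -/
abbrev PathsPos := {l : List Q.A // l ≠ [] ∧ l.Chain' Q.Comp}

/-- Paths: either a lazy path `e_i` at a vertex `i`, or a positive-length path. -/
abbrev Pth := V ⊕ Q.PathsPos

namespace Pth

variable {Q}

/-- The length of a path. -/
def length : Q.Pth → ℕ := Sum.elim (fun _ => 0) (fun l => l.1.length)

/-- The tail `t(p)` (starting vertex) of a path. -/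
def src : Q.Pth → V := Sum.elim id (fun l => Q.src (l.1.getLast l.2.1))

/-- The head `h(p)` (ending vertex) of a path. -/
def tgt : Q.Pth → V := Sum.elim id (fun l => Q.tgt (l.1.head l.2.1))

end Pth

/-- The underlying vector space of the complete path algebra ℂ⟨⟨Q⟩⟩: all possibly
infinite ℂ-linear combinations of paths, encoded as coefficient functions. -/
abbrev CPA := Q.Pth → ℂ

/-- The coefficient of a list of arrows, viewed as a path (with `x` as fallback vertex
for the empty list). -/
noncomputable def coefAt (u : Q.CPA) (x : V) (l : List Q.A) : ℂ :=
  if h : l = [] then u (Sum.inl x)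
  else if hc : l.Chain' Q.Comp then u (Sum.inr ⟨l, h, hc⟩) else 0

/-- The multiplication of the (complete) path algebra, induced by concatenation of
paths: the coefficient of a path `p` in `conv u v` is the (finite) sum over all
splittings `p = p₁ p₂` of `u(p₁) * v(p₂)`. -/
noncomputable def conv (u v : Q.CPA) : Q.CPA := fun p =>
  match p with
  | Sum.inl x => u (Sum.inl x) * v (Sum.inl x)
  | Sum.inr l => ∑ n ∈ Finset.range (l.1.length + 1),
      coefAt Q u (Q.tgt (l.1.head l.2.1)) (l.1.take n) *
      coefAt Q v (Q.src (l.1.getLast l.2.1)) (l.1.drop n)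

/-- The identity element `∑ i e_i` of the path algebra. -/
noncomputable def one : Q.CPA := Sum.elim (fun _ => 1) (fun _ => 0)

/-- The idempotent `e_i` (the length-0 path at vertex `i`). -/
noncomputable def idem (i : V) : Q.CPA := fun p => if p = Sum.inl i then 1 else 0

/-- The arrow `a`, viewed as an element of the path algebra. -/
noncomputable def arrowδ (a : Q.A) : Q.CPA := fun p =>
  if p = Sum.inr ⟨[a], List.cons_ne_nil a [], List.isChain_singleton a⟩ then 1 else 0

/-- A path, viewed as an element of the path algebra. -/
noncomputable def pathδ (p₀ : Q.Pth) : Q.CPA := fun p => if p = p₀ then 1 else 0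

/-- Elements of ℂ⟨⟨Q⟩⟩ with coefficients supported in bounded length, i.e. the
elements of the path algebra ℂ⟨Q⟩ = ⊕_{ℓ≥0} A^ℓ. -/
def Bounded (u : Q.CPA) : Prop := ∃ N : ℕ, ∀ p : Q.Pth, N ≤ p.length → u p = 0

/-- A cycle is a positive-length path which starts and ends at the same vertex. -/
def IsCycle (p : Q.Pth) : Prop := 0 < p.length ∧ p.src = p.tgt

/-- A potential: a (possibly infinite) linear combination of cycles, no two of which
are rotations of each other. -/
def IsPotential (S : Q.CPA) : Prop :=
  (∀ p : Q.Pth, S p ≠ 0 → Q.IsCycle p) ∧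
  ∀ l l' : Q.PathsPos, S (Sum.inr l) ≠ 0 → S (Sum.inr l') ≠ 0 → l.1 ~r l'.1 → l = l'

/-- The cyclic derivative with respect to the arrow `a`:
`∂_a(α₁…α_ℓ) = ∑_k δ_{a,α_k} α_{k+1}…α_ℓα₁…α_{k-1}`, extended by linearity and
continuity.  The coefficient of a path `q` in `∂_a S` is the sum of the coefficients
in `S` of all rotations of the cycle `a·q`. -/
noncomputable def cycDer (a : Q.A) (S : Q.CPA) : Q.CPA := fun p =>
  match p with
  | Sum.inl x =>
      if Q.src a = x ∧ Q.tgt a = x then coefAt Q S x [a] else 0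
  | Sum.inr l => ∑ m ∈ Finset.range (l.1.length + 1),
      coefAt Q S (Q.tgt a) ((a :: l.1).rotate m)

/-- The two-sided ideal generated by a subset of ℂ⟨⟨Q⟩⟩. -/
def idealGen (Sg : Set Q.CPA) : Set Q.CPA :=
  {x | ∃ (n : ℕ) (f g s : Fin n → Q.CPA), (∀ k, s k ∈ Sg) ∧
    x = ∑ k, Q.conv (f k) (Q.conv (s k) (g k))}

/-- The closure of a subset of ℂ⟨⟨Q⟩⟩ in the 𝔪-adic topology. -/
def mAdicCl (T : Set Q.CPA) : Set Q.CPA :=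
  {u | ∀ n : ℕ, ∃ v ∈ T, ∀ p : Q.Pth, p.length < n → u p = v p}

/-- The Jacobian ideal `J(S)`: the closure of the two-sided ideal generated by the
cyclic derivatives of `S`. -/
def jacobIdeal (S : Q.CPA) : Set Q.CPA :=
  Q.mAdicCl (Q.idealGen (Set.range fun a => Q.cycDer a S))

/-- The set of differences `c - c'` where `c` is a cycle and `c'` its rotation. -/
def rotDiffs : Set Q.CPA :=
  {x | ∃ l l' : Q.PathsPos, Q.IsCycle (Sum.inr l) ∧ l'.1 = l.1.rotate 1 ∧
    x = Q.pathδ (Sum.inr l) - Q.pathδ (Sum.inr l')}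

/-- Cyclic equivalence: `S - S'` lies in the closure of the span of the
rotation differences of cycles. -/
def CycEquiv (S S' : Q.CPA) : Prop :=
  S - S' ∈ Q.mAdicCl (Submodule.span ℂ Q.rotDiffs : Submodule ℂ Q.CPA)

end Quiv

namespace Quiv

variable {V : Type} {Q : Quiv V}

@[simp] lemma length_inl (x : V) : Pth.length (Sum.inl x : Q.Pth) = 0 := rfl

@[simp] lemma length_inr (l : Q.PathsPos) : Pth.length (Sum.inr l : Q.Pth) = l.1.length := rfl

lemma coefAt_sub (u v : Q.CPA) (x : V) (l : List Q.A) :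
    coefAt Q (u - v) x l = coefAt Q u x l - coefAt Q v x l := by
  unfold coefAt; split_ifs <;> simp

lemma coefAt_add (u v : Q.CPA) (x : V) (l : List Q.A) :
    coefAt Q (u + v) x l = coefAt Q u x l + coefAt Q v x l := by
  unfold coefAt; split_ifs <;> simp

lemma coefAt_smul (c : ℂ) (u : Q.CPA) (x : V) (l : List Q.A) :
    coefAt Q (c • u) x l = c * coefAt Q u x l := by
  unfold coefAt; split_ifs <;> simp

lemma coefAt_zero (x : V) (l : List Q.A) : coefAt Q (0 : Q.CPA) x l = 0 := by
  unfold coefAt; split_ifs <;> simp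

lemma cycDer_sub (a : Q.A) (u v : Q.CPA) :
    Q.cycDer a (u - v) = Q.cycDer a u - Q.cycDer a v := by
  funext p
  rw [Pi.sub_apply]
  cases p with
  | inl x =>
    show (if Q.src a = x ∧ Q.tgt a = x then coefAt Q (u - v) x [a] else (0 : ℂ)) =
      (if Q.src a = x ∧ Q.tgt a = x then coefAt Q u x [a] else (0 : ℂ)) -
      (if Q.src a = x ∧ Q.tgt a = x then coefAt Q v x [a] else (0 : ℂ))
    split_ifs <;> simp [coefAt_sub]
  | inr l =>
    show (∑ m ∈ Finset.range (l.1.length + 1),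
        coefAt Q (u - v) (Q.tgt a) ((a :: l.1).rotate m)) =
      (∑ m ∈ Finset.range (l.1.length + 1),
        coefAt Q u (Q.tgt a) ((a :: l.1).rotate m)) -
      (∑ m ∈ Finset.range (l.1.length + 1),
        coefAt Q v (Q.tgt a) ((a :: l.1).rotate m))
    simp [coefAt_sub, Finset.sum_sub_distrib]

lemma cycDer_add (a : Q.A) (u v : Q.CPA) :
    Q.cycDer a (u + v) = Q.cycDer a u + Q.cycDer a v := by
  funext p
  rw [Pi.add_apply]
  cases p with
  | inl x =>
    show (if Q.src a = x ∧ Q.tgt a = x then coefAt Q (u + v) x [a] else (0 : ℂ)) =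
      (if Q.src a = x ∧ Q.tgt a = x then coefAt Q u x [a] else (0 : ℂ)) +
      (if Q.src a = x ∧ Q.tgt a = x then coefAt Q v x [a] else (0 : ℂ))
    split_ifs <;> simp [coefAt_add]
  | inr l =>
    show (∑ m ∈ Finset.range (l.1.length + 1),
        coefAt Q (u + v) (Q.tgt a) ((a :: l.1).rotate m)) =
      (∑ m ∈ Finset.range (l.1.length + 1),
        coefAt Q u (Q.tgt a) ((a :: l.1).rotate m)) +
      (∑ m ∈ Finset.range (l.1.length + 1),
        coefAt Q v (Q.tgt a) ((a :: l.1).rotate m))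
    simp [coefAt_add, Finset.sum_add_distrib]

lemma cycDer_smul (a : Q.A) (c : ℂ) (u : Q.CPA) :
    Q.cycDer a (c • u) = c • Q.cycDer a u := by
  funext p
  rw [Pi.smul_apply, smul_eq_mul]
  cases p with
  | inl x =>
    show (if Q.src a = x ∧ Q.tgt a = x then coefAt Q (c • u) x [a] else (0 : ℂ)) =
      c * (if Q.src a = x ∧ Q.tgt a = x then coefAt Q u x [a] else (0 : ℂ))
    split_ifs <;> simp [coefAt_smul]
  | inr l =>
    show (∑ m ∈ Finset.range (l.1.length + 1),
        coefAt Q (c • u) (Q.tgt a) ((a :: l.1).rotate m)) =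
      c * (∑ m ∈ Finset.range (l.1.length + 1),
        coefAt Q u (Q.tgt a) ((a :: l.1).rotate m))
    simp [coefAt_smul, Finset.mul_sum]

lemma cycDer_zero (a : Q.A) : Q.cycDer a (0 : Q.CPA) = 0 := by
  funext p
  rw [Pi.zero_apply]
  cases p with
  | inl x =>
    show (if Q.src a = x ∧ Q.tgt a = x then coefAt Q (0 : Q.CPA) x [a] else (0 : ℂ)) = 0
    split_ifs <;> simp [coefAt_zero]
  | inr l =>
    show (∑ m ∈ Finset.range (l.1.length + 1),
        coefAt Q (0 : Q.CPA) (Q.tgt a) ((a :: l.1).rotate m)) = 0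
    simp [coefAt_zero]

lemma coefAt_congr {u v : Q.CPA} (x : V) (l : List Q.A)
    (h : ∀ q : Q.Pth, q.length ≤ l.length → u q = v q) :
    coefAt Q u x l = coefAt Q v x l := by
  unfold coefAt
  split_ifs with h1 h2
  · exact h _ (by simp)
  · exact h _ (by simp)
  · rfl

lemma cycDer_congr (a : Q.A) {u v : Q.CPA} (p : Q.Pth)
    (h : ∀ q : Q.Pth, q.length < p.length + 2 → u q = v q) :
    Q.cycDer a u p = Q.cycDer a v p := by
  cases p with
  | inl x =>
    show (if Q.src a = x ∧ Q.tgt a = x then coefAt Q u x [a] else (0 : ℂ)) =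
      (if Q.src a = x ∧ Q.tgt a = x then coefAt Q v x [a] else (0 : ℂ))
    rw [coefAt_congr x [a] (fun q hq => h q (by simp at hq ⊢; omega))]
  | inr l =>
    show (∑ m ∈ Finset.range (l.1.length + 1),
        coefAt Q u (Q.tgt a) ((a :: l.1).rotate m)) =
      (∑ m ∈ Finset.range (l.1.length + 1),
        coefAt Q v (Q.tgt a) ((a :: l.1).rotate m))
    refine Finset.sum_congr rfl fun m _ => coefAt_congr _ _ fun q hq => h q ?_
    have hlen : ((a :: l.1).rotate m).length = l.1.length + 1 := by
      simp [List.length_rotate]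
    rw [hlen] at hq
    simp only [length_inr]
    omega

lemma coefAt_pathδ (c : Q.PathsPos) (x : V) (w : List Q.A) (hw : w ≠ []) :
    coefAt Q (Q.pathδ (Sum.inr c)) x w = if w = c.1 then 1 else 0 := by
  unfold coefAt pathδ
  rw [dif_neg hw]
  by_cases hc : w.Chain' Q.Comp
  · rw [dif_pos hc]
    simp [Sum.inr.injEq, Subtype.ext_iff]
  · rw [dif_neg hc, if_neg]
    intro he
    exact hc (he ▸ c.2.2)

lemma sum_rot (w c : List Q.A) (hw : w ≠ []) :
    (∑ m ∈ Finset.range w.length, if w.rotate m = c then (1 : ℂ) else 0) =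
    ∑ m ∈ Finset.range w.length, if w.rotate m = c.rotate 1 then (1 : ℂ) else 0 := by
  have hn : 0 < w.length := List.length_pos_iff.mpr hw
  refine Finset.sum_nbij' (fun m => (m + 1) % w.length)
    (fun m => (m + (w.length - 1)) % w.length) ?_ ?_ ?_ ?_ ?_
  · intro m _; exact Finset.mem_range.mpr (Nat.mod_lt _ hn)
  · intro m _; exact Finset.mem_range.mpr (Nat.mod_lt _ hn)
  · intro m hm
    rw [Finset.mem_range] at hm
    calc ((m + 1) % w.length + (w.length - 1)) % w.length
        = (m + 1 + (w.length - 1)) % w.length := Nat.mod_add_mod _ _ _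
      _ = (m + w.length) % w.length := by congr 1; omega
      _ = m % w.length := Nat.add_mod_right m w.length
      _ = m := Nat.mod_eq_of_lt hm
  · intro m hm
    rw [Finset.mem_range] at hm
    calc ((m + (w.length - 1)) % w.length + 1) % w.length
        = (m + (w.length - 1) + 1) % w.length := Nat.mod_add_mod _ _ _
      _ = (m + w.length) % w.length := by congr 1; omega
      _ = m % w.length := Nat.add_mod_right m w.length
      _ = m := Nat.mod_eq_of_lt hm
  · intro m _
    have key : w.rotate ((m + 1) % w.length) = c.rotate 1 ↔ w.rotate m = c := by
      rw [List.rotate_mod, ← List.rotate_rotate]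
      exact (List.rotate_injective 1).eq_iff
    by_cases h : w.rotate m = c
    · rw [if_pos h, if_pos (key.mpr h)]
    · rw [if_neg h, if_neg (fun hh => h (key.mp hh))]

lemma cycDer_pathδ_rot (a : Q.A) (hloopfree : ∀ b : Q.A, Q.src b ≠ Q.tgt b)
    (c c' : Q.PathsPos) (h : c'.1 = c.1.rotate 1) :
    Q.cycDer a (Q.pathδ (Sum.inr c)) = Q.cycDer a (Q.pathδ (Sum.inr c')) := by
  funext p
  cases p with
  | inl x =>
    show (if Q.src a = x ∧ Q.tgt a = x then coefAt Q (Q.pathδ (Sum.inr c)) x [a] else 0) =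
      (if Q.src a = x ∧ Q.tgt a = x then coefAt Q (Q.pathδ (Sum.inr c')) x [a] else 0)
    rw [if_neg, if_neg] <;> rintro ⟨h1, h2⟩ <;> exact hloopfree a (h1.trans h2.symm)
  | inr l =>
    show (∑ m ∈ Finset.range (l.1.length + 1),
        coefAt Q (Q.pathδ (Sum.inr c)) (Q.tgt a) ((a :: l.1).rotate m)) =
      (∑ m ∈ Finset.range (l.1.length + 1),
        coefAt Q (Q.pathδ (Sum.inr c')) (Q.tgt a) ((a :: l.1).rotate m))
    have hne : ∀ m : ℕ, (a :: l.1).rotate m ≠ [] := fun m => by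
      simp [List.rotate_eq_nil_iff]
    have e1 : ∀ m, coefAt Q (Q.pathδ (Sum.inr c)) (Q.tgt a) ((a :: l.1).rotate m) =
        if (a :: l.1).rotate m = c.1 then (1 : ℂ) else 0 :=
      fun m => coefAt_pathδ _ _ _ (hne m)
    have e2 : ∀ m, coefAt Q (Q.pathδ (Sum.inr c')) (Q.tgt a) ((a :: l.1).rotate m) =
        if (a :: l.1).rotate m = c'.1 then (1 : ℂ) else 0 :=
      fun m => coefAt_pathδ _ _ _ (hne m)
    simp only [e1, e2, h]
    exact sum_rot (a :: l.1) c.1 (List.cons_ne_nil _ _)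

lemma cycDer_span_zero (hloopfree : ∀ b : Q.A, Q.src b ≠ Q.tgt b) (a : Q.A) {u : Q.CPA}
    (hu : u ∈ Submodule.span ℂ Q.rotDiffs) : Q.cycDer a u = 0 := by
  induction hu using Submodule.span_induction with
  | mem x hx =>
    obtain ⟨c, c', _, hcc, rfl⟩ := hx
    rw [cycDer_sub, cycDer_pathδ_rot a hloopfree c c' hcc, sub_self]
  | zero => exact cycDer_zero a
  | add x y _ _ hx hy => rw [cycDer_add, hx, hy, add_zero]
  | smul r x _ hx => rw [cycDer_smul, hx, smul_zero]

end Quiv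

open Quiv in
/-- Cyclic equivalence of potentials is an equivalence relation, and it is compatible
with Jacobian ideals: if two potentials `S` and `S'` on a quiver `Q` are cyclically
equivalent, then `J(S) = J(S')`, and hence `𝒫(Q,S) = 𝒫(Q,S')`. -/
theorem stmt14 (V : Type) [Fintype V] [DecidableEq V] (Q : Quiv V) [Fintype Q.A]
    (hloopfree : ∀ a : Q.A, Q.src a ≠ Q.tgt a) :
    Equivalence Q.CycEquiv ∧
    ∀ S S' : Q.CPA, Q.IsPotential S → Q.IsPotential S' → Q.CycEquiv S S' →
      Q.jacobIdeal S = Q.jacobIdeal S' := by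
  constructor
  · refine ⟨fun S => ?_, fun {S S'} h => ?_, fun {S S' S''} h1 h2 => ?_⟩
    · intro n
      exact ⟨0, Submodule.zero_mem _, fun p _ => by simp⟩
    · intro n
      obtain ⟨v, hv, hvp⟩ := h n
      refine ⟨-v, Submodule.neg_mem _ hv, fun p hp => ?_⟩
      have := hvp p hp
      simp only [Pi.sub_apply, Pi.neg_apply] at this ⊢
      linear_combination -this
    · intro n
      obtain ⟨v, hv, hvp⟩ := h1 n
      obtain ⟨w, hw, hwp⟩ := h2 n
      refine ⟨v + w, Submodule.add_mem _ hv hw, fun p hp => ?_⟩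
      have hv' := hvp p hp
      have hw' := hwp p hp
      simp only [Pi.sub_apply, Pi.add_apply] at hv' hw' ⊢
      linear_combination hv' + hw'
  · intro S S' _ _ h
    have hder : (fun a => Q.cycDer a S) = fun a => Q.cycDer a S' := by
      funext a p
      obtain ⟨v, hv, hvp⟩ := h (p.length + 2)
      have h1 : Q.cycDer a (S - S') p = Q.cycDer a v p :=
        cycDer_congr a p fun q hq => hvp q hq
      have h2 : Q.cycDer a v = 0 := cycDer_span_zero hloopfree a hv
      rw [cycDer_sub] at h1
      rw [h2] at h1
      simp only [Pi.sub_apply, Pi.zero_apply] at h1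
      linear_combination h1
    unfold jacobIdeal
    rw [hder]
end

section
/- In the graded quiver Q̄ associated to a QP (Q,S) (arrows of Q in degree 0, reversed arrows a* in degree −1, loops t_i in degree −2), the map d defined by d(a) = 0, d(a*) = ∂_a(S), d(t_i) = e_i(Σ_{a∈Q₁}[a,a*])e_i, extended by the graded Leibniz rule, satisfies d(d(t_i)) = 0 for every vertex i; i.e., d² vanishes on the degree −2 generators. -/
open scoped Classical

namespace Quiv

variable {V : Type} (Q : Quiv V)

lemma coefAt_ne_nil (u : Q.CPA) (x y : V) {m : List Q.A} (h : m ≠ []) :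
    Q.coefAt u x m = Q.coefAt u y m := by
  unfold coefAt; rw [dif_neg h, dif_neg h]

lemma coefAt_zero_s16 (x : V) (m : List Q.A) : Q.coefAt 0 x m = 0 := by
  unfold coefAt
  split
  · rfl
  split <;> rfl

lemma conv_zero_left (v : Q.CPA) : Q.conv 0 v = 0 := by
  funext p
  cases p with
  | inl x => simp [conv]
  | inr l => simp [conv, coefAt_zero_s16]

lemma conv_zero_right (u : Q.CPA) : Q.conv u 0 = 0 := by
  funext p
  cases p with
  | inl x => simp [conv]
  | inr l => simp [conv, coefAt_zero_s16]

lemma coefAt_arrowδ (a : Q.A) (x : V) (m : List Q.A) :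
    Q.coefAt (Q.arrowδ a) x m = if m = [a] then 1 else 0 := by
  unfold coefAt arrowδ
  by_cases h : m = []
  · subst h; simp
  · rw [dif_neg h]
    by_cases hc : m.Chain' Q.Comp
    · rw [dif_pos hc]
      by_cases he : m = [a]
      · subst he; simp
      · rw [if_neg, if_neg he]
        simp only [Sum.inr.injEq, Subtype.mk.injEq]
        exact he
    · rw [dif_neg hc, if_neg]
      rintro rfl
      exact hc (List.isChain_singleton a)

lemma coefAt_single (hloop : ∀ a : Q.A, Q.src a ≠ Q.tgt a) (S : Q.CPA)
    (hS : ∀ p : Q.Pth, S p ≠ 0 → Q.IsCycle p) (a : Q.A) (x : V) :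
    Q.coefAt S x [a] = 0 := by
  unfold coefAt
  rw [dif_neg (List.cons_ne_nil a []), dif_pos (show [a].Chain' Q.Comp from List.isChain_singleton a)]
  by_contra h
  have := (hS _ h).2
  simp only [Pth.src, Pth.tgt, Sum.elim_inr] at this
  exact hloop a (by simpa using this)

lemma sum_shift (f : ℕ → ℂ) (L : ℕ) (hf : ∀ n, f (n + L) = f n) (c : ℕ) :
    ∑ m ∈ Finset.range L, f (c + m) = ∑ m ∈ Finset.range L, f m := by
  induction c with
  | zero => simp
  | succ c ih =>
    rw [← ih]
    rcases Nat.eq_zero_or_pos L with h | h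
    · subst h; simp
    obtain ⟨K, rfl⟩ : ∃ K, L = K + 1 := ⟨L - 1, (Nat.succ_pred_eq_of_pos h).symm⟩
    rw [Finset.sum_range_succ, Finset.sum_range_succ']
    have h1 : f (c + 1 + K) = f c := by
      rw [show c + 1 + K = c + (K + 1) by omega]; exact hf c
    rw [h1]
    congr 1
    exact Finset.sum_congr rfl fun m _ => by rw [show c + (m + 1) = c + 1 + m by omega]

end Quiv
namespace Quiv

variable {V : Type} (Q : Quiv V)

lemma lemA (hloop : ∀ a : Q.A, Q.src a ≠ Q.tgt a) (S : Q.CPA)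
    (hS : ∀ p : Q.Pth, S p ≠ 0 → Q.IsCycle p) (a : Q.A) (l : Q.PathsPos) :
    Q.conv (Q.arrowδ a) (Q.cycDer a S) (Sum.inr l) =
      if l.1.head l.2.1 = a then
        ∑ m ∈ Finset.range l.1.length, Q.coefAt S (Q.tgt a) (l.1.rotate m)
      else 0 := by
  obtain ⟨_ | ⟨b, q⟩, hne, hch⟩ := l
  · exact absurd rfl hne
  simp only [conv, coefAt_arrowδ]
  rw [Finset.sum_eq_single 1]
  · simp only [List.take_succ_cons, List.take_zero, List.drop_succ_cons, List.drop_zero,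
      List.head_cons, List.length_cons]
    by_cases hba : b = a
    · subst hba
      simp only [eq_self_iff_true, ↓reduceIte, one_mul]
      rcases q with _ | ⟨c, q'⟩
      · -- q = []
        have h1 : Q.coefAt (Q.cycDer b S) (Q.src ([b].getLast hne)) [] = 0 := by
          unfold coefAt
          rw [dif_pos rfl]
          have h2 : Q.cycDer b S (Sum.inl (Q.src ([b].getLast hne))) =
              if Q.src b = Q.src ([b].getLast hne) ∧ Q.tgt b = Q.src ([b].getLast hne)
              then Q.coefAt S (Q.src ([b].getLast hne)) [b] else 0 := rfl
          rw [h2, if_neg]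
          rintro ⟨ha1, ha2⟩
          exact hloop b (ha1.trans ha2.symm)
        rw [h1]
        simp only [List.length_nil, Nat.zero_add, Finset.sum_range_one, List.rotate_zero]
        exact (Q.coefAt_single hloop S hS b _).symm
      · -- q = c :: q'
        have hq : (c :: q').Chain' Q.Comp := hch.tail
        have h1 : Q.coefAt (Q.cycDer b S) (Q.src ((b :: c :: q').getLast hne)) (c :: q') =
            Q.cycDer b S (Sum.inr ⟨c :: q', List.cons_ne_nil c q', hq⟩) := by
          unfold coefAt
          rw [dif_neg (List.cons_ne_nil c q'), dif_pos hq]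
        rw [h1]
        simp [cycDer]
    · have h' : ¬ ([b] = [a]) := by simpa using hba
      simp only [h', hba, ↓reduceIte, zero_mul]
  · intro n hn hn1
    rw [if_neg, zero_mul]
    intro he
    have hn' := Finset.mem_range.mp hn
    have h1 : min n (q.length + 1) = 1 := by
      have := congrArg List.length he
      simpa using this
    simp only [List.length_cons] at hn'
    omega
  · intro h
    exact absurd (Finset.mem_range.mpr (by simp)) h

end Quiv
namespace Quiv

variable {V : Type} (Q : Quiv V)

lemma lemB (hloop : ∀ a : Q.A, Q.src a ≠ Q.tgt a) (S : Q.CPA)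
    (hS : ∀ p : Q.Pth, S p ≠ 0 → Q.IsCycle p) (a : Q.A) (l : Q.PathsPos) :
    Q.conv (Q.cycDer a S) (Q.arrowδ a) (Sum.inr l) =
      if l.1.getLast l.2.1 = a then
        ∑ m ∈ Finset.range l.1.length,
          Q.coefAt S (Q.tgt a) (l.1.rotate (l.1.length - 1 + m))
      else 0 := by
  obtain ⟨l0, hne, hch⟩ := l
  obtain ⟨m, c, rfl⟩ : ∃ m c, l0 = m ++ [c] := by
    rcases List.eq_nil_or_concat l0 with h | ⟨m, c, h⟩
    · exact absurd h hne
    · exact ⟨m, c, by simpa using h⟩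
  have hgl : (m ++ [c]).getLast hne = c := by simp
  simp only [conv, coefAt_arrowδ, hgl]
  rw [Finset.sum_eq_single m.length]
  · rw [List.take_left, List.drop_left]
    by_cases hca : c = a
    · subst hca
      rw [if_pos rfl, if_pos rfl, mul_one]
      have hrot : ∀ k, (m ++ [c]).rotate ((m ++ [c]).length - 1 + k) = (c :: m).rotate k := by
        intro k
        have h1 : (m ++ [c]).length - 1 = m.length := by simp
        have h2 : (m ++ [c]).rotate m.length = c :: m := by
          rw [List.rotate_eq_drop_append_take (by simp), List.drop_left, List.take_left,
            List.singleton_append]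
        rw [h1, ← List.rotate_rotate, h2]
      simp only [hrot]
      rcases m with _ | ⟨e, m'⟩
      · -- m = []
        have h1 : Q.coefAt (Q.cycDer c S) (Q.tgt (([] ++ [c]).head hne)) [] = 0 := by
          unfold coefAt
          rw [dif_pos rfl]
          have h2 : Q.cycDer c S (Sum.inl (Q.tgt (([] ++ [c]).head hne))) =
              if Q.src c = Q.tgt (([] ++ [c]).head hne) ∧
                 Q.tgt c = Q.tgt (([] ++ [c]).head hne)
              then Q.coefAt S (Q.tgt (([] ++ [c]).head hne)) [c] else 0 := rfl
          rw [h2, if_neg]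
          rintro ⟨ha1, ha2⟩
          have : ([] ++ [c]).head hne = c := rfl
          rw [this] at ha1
          exact hloop c ha1
        rw [h1]
        simp only [List.nil_append, List.length_singleton, Finset.sum_range_one,
          List.rotate_zero]
        exact (Q.coefAt_single hloop S hS c _).symm
      · -- m = e :: m'
        have hpre : (e :: m').Chain' Q.Comp := hch.prefix ⟨[c], rfl⟩
        have h1 : Q.coefAt (Q.cycDer c S) (Q.tgt (((e :: m') ++ [c]).head hne)) (e :: m') =
            Q.cycDer c S (Sum.inr ⟨e :: m', List.cons_ne_nil e m', hpre⟩) := by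
          unfold coefAt
          rw [dif_neg (List.cons_ne_nil e m'), dif_pos hpre]
        rw [h1]
        simp [cycDer]
    · rw [if_neg (by simpa using hca), mul_zero, if_neg hca]
  · intro n hn hn1
    rw [if_neg, mul_zero]
    intro he
    have hn' := Finset.mem_range.mp hn
    have h1 : (m ++ [c]).length - n = 1 := by
      have := congrArg List.length he
      simpa using this
    simp only [List.length_append, List.length_singleton] at hn' h1
    omega
  · intro h
    exact absurd (Finset.mem_range.mpr (by simp)) h

end Quiv
open Quiv in
/-- In the complete Ginzburg dg algebra of a QP `(Q,S)`, the differential `d` (with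
`d(a) = 0`, `d(a*) = ∂_a S` and `d(t_i) = e_i (∑_{a∈Q₁} [a,a*]) e_i`, extended by the
graded Leibniz rule) satisfies `d(d(t_i)) = 0` for every vertex `i`: indeed
`d(d(t_i)) = e_i (∑_{a∈Q₁} (a ∂_a S − (∂_a S) a)) e_i`, and this element of
`ℂ⟨⟨Q⟩⟩` vanishes. -/
theorem stmt16 (V : Type) [Fintype V] [DecidableEq V] (Q : Quiv V) [Fintype Q.A]
    (hloopfree : ∀ a : Q.A, Q.src a ≠ Q.tgt a)
    (h2acyclic : ∀ a b : Q.A, ¬(Q.src a = Q.tgt b ∧ Q.src b = Q.tgt a))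
    (S : Q.CPA) (hS : Q.IsPotential S) :
    ∀ i : V,
      Q.conv (Q.idem i)
        (Q.conv
          (∑ a : Q.A,
            (Q.conv (Q.arrowδ a) (Q.cycDer a S) - Q.conv (Q.cycDer a S) (Q.arrowδ a)))
          (Q.idem i)) = 0 := by
  intro i
  have hM : (∑ a : Q.A,
      (Q.conv (Q.arrowδ a) (Q.cycDer a S) - Q.conv (Q.cycDer a S) (Q.arrowδ a))) = 0 := by
    funext p
    rw [Finset.sum_apply, Pi.zero_apply]
    cases p with
    | inl x =>
      apply Finset.sum_eq_zero
      intro a _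
      have h1 : Q.arrowδ a (Sum.inl x) = 0 := by simp [Quiv.arrowδ]
      have h2 : Q.conv (Q.arrowδ a) (Q.cycDer a S) (Sum.inl x) =
          Q.arrowδ a (Sum.inl x) * Q.cycDer a S (Sum.inl x) := rfl
      have h3 : Q.conv (Q.cycDer a S) (Q.arrowδ a) (Sum.inl x) =
          Q.cycDer a S (Sum.inl x) * Q.arrowδ a (Sum.inl x) := rfl
      simp only [Pi.sub_apply, h2, h3, h1, zero_mul, mul_zero, sub_zero]
    | inr l =>
      simp only [Pi.sub_apply, Q.lemA hloopfree S hS.1, Q.lemB hloopfree S hS.1]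
      rw [Finset.sum_sub_distrib, Finset.sum_ite_eq, Finset.sum_ite_eq]
      simp only [Finset.mem_univ, if_true]
      rw [sub_eq_zero]
      have hper : ∀ n, Q.coefAt S (Q.tgt (l.1.getLast l.2.1)) (l.1.rotate (n + l.1.length))
          = Q.coefAt S (Q.tgt (l.1.getLast l.2.1)) (l.1.rotate n) := by
        intro n
        have h4 : l.1.rotate (n + l.1.length) =
            (l.1.rotate n).rotate (l.1.rotate n).length := by
          rw [List.rotate_rotate, List.length_rotate]
        rw [h4, List.rotate_length]
      have key := Quiv.sum_shift
        (fun n => Q.coefAt S (Q.tgt (l.1.getLast l.2.1)) (l.1.rotate n))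
        l.1.length hper (l.1.length - 1)
      rw [key]
      refine Finset.sum_congr rfl fun m _ => Q.coefAt_ne_nil S _ _ ?_
      rw [Ne, List.rotate_eq_nil_iff]
      exact l.2.1
  rw [hM, Q.conv_zero_left, Q.conv_zero_right]
end
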